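/- If every left R-module is Gorenstein flat (i.e., the left weak Gorenstein global dimension of R is 0), then every right injective R-module is flat and every left injective R-module is flat; i.e., R is an IF ring. -/

import Mathlib

open TensorProduct

universe u

section NCTensor
variable (R : Type u) [Ring R]

/-- Generators of the defect submodule used to define the tensor product of a right
`R`-module `N` and a left `R`-module `M` over a (possibly noncommutative) ring `R`. -/
def NCRel (N M : Type u) [AddCommGroup N] [Module Rᵐᵒᵖ N] [AddCommGroup M] [Module R M] :
    Submodule ℤ (N ⊗[ℤ] M) :=
  Submodule.span ℤ { t | ∃ (n : N) (r : R) (m : M),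
    t = (MulOpposite.op r • n) ⊗ₜ[ℤ] m - n ⊗ₜ[ℤ] (r • m) }

/-- The tensor product `N ⊗_R M` of a right `R`-module and a left `R`-module, as an
abelian group. -/
def NCTensor (N M : Type u) [AddCommGroup N] [Module Rᵐᵒᵖ N] [AddCommGroup M] [Module R M] :
    Type u :=
  (N ⊗[ℤ] M) ⧸ NCRel R N M

noncomputable instance (N M : Type u) [AddCommGroup N] [Module Rᵐᵒᵖ N] [AddCommGroup M] [Module R M] :
    AddCommGroup (NCTensor R N M) :=
  inferInstanceAs (AddCommGroup ((N ⊗[ℤ] M) ⧸ NCRel R N M))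

noncomputable instance (N M : Type u) [AddCommGroup N] [Module Rᵐᵒᵖ N] [AddCommGroup M] [Module R M] :
    Module ℤ (NCTensor R N M) :=
  inferInstanceAs (Module ℤ ((N ⊗[ℤ] M) ⧸ NCRel R N M))

/-- The map `I ⊗_R M → I ⊗_R M'` induced by a map `M →ₗ[R] M'` of left modules. -/
noncomputable def NCmap (N : Type u) [AddCommGroup N] [Module Rᵐᵒᵖ N] {M M' : Type u} [AddCommGroup M]
    [Module R M] [AddCommGroup M'] [Module R M'] (f : M →ₗ[R] M') :
    NCTensor R N M →ₗ[ℤ] NCTensor R N M' :=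
  Submodule.mapQ _ _ (LinearMap.lTensor N (f.restrictScalars ℤ)) <| by
    rw [NCRel, Submodule.span_le]
    rintro t ⟨n, r, m, rfl⟩
    refine Submodule.mem_comap.mpr (Submodule.subset_span ?_)
    refine ⟨n, r, f m, ?_⟩
    exact (map_sub (LinearMap.lTensor N (f.restrictScalars ℤ)) _ _).trans (by simp [LinearMap.lTensor_tmul, map_sub, LinearMap.map_smul])

/-- The map `N ⊗_R M → N' ⊗_R M` induced by a map `N →ₗ[Rᵐᵒᵖ] N'` of right modules. -/
noncomputable def NCmapL (R : Type u) [Ring R] {N N' : Type u} [AddCommGroup N]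
    [Module Rᵐᵒᵖ N] [AddCommGroup N'] [Module Rᵐᵒᵖ N'] (M : Type u) [AddCommGroup M]
    [Module R M] (f : N →ₗ[Rᵐᵒᵖ] N') :
    NCTensor R N M →ₗ[ℤ] NCTensor R N' M :=
  Submodule.mapQ _ _ (LinearMap.rTensor M f.toAddMonoidHom.toIntLinearMap) <| by
    rw [NCRel, Submodule.span_le]
    rintro t ⟨n, r, m, rfl⟩
    refine Submodule.mem_comap.mpr (Submodule.subset_span ?_)
    refine ⟨f n, r, m, ?_⟩
    exact (map_sub (LinearMap.rTensor M f.toAddMonoidHom.toIntLinearMap) _ _).trans (by simp [LinearMap.rTensor_tmul, map_sub, LinearMap.map_smul])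

/-- A left `R`-module `M` (over a possibly noncommutative ring) is flat if tensoring with
`M` preserves injectivity of maps of right `R`-modules. -/
def FlatModule (R : Type u) [Ring R] (M : Type u) [AddCommGroup M] [Module R M] : Prop :=
  ∀ (N N' : Type u) [AddCommGroup N] [Module Rᵐᵒᵖ N] [AddCommGroup N'] [Module Rᵐᵒᵖ N']
    (f : N →ₗ[Rᵐᵒᵖ] N'), Function.Injective f → Function.Injective (NCmapL R M f)

end NCTensor
section GDefs
variable (R : Type u) [Ring R]

/-- A complete flat resolution witnessing that `M` is a Gorenstein flat left `R`-module:
an exact sequence `⋯ → F₂ → F₁ → F₀ → F₋₁ → ⋯` of flat left `R`-modules with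
`M ≅ Im(F₀ → F₋₁)` which stays exact after applying `I ⊗_R -` for every injective right
`R`-module `I`. -/
structure CompleteFlatResolution (M : Type u) [AddCommGroup M] [Module R M] :
    Type (u + 1) where
  F : ℤ → ModuleCat.{u} R
  d : ∀ z : ℤ, F (z + 1) →ₗ[R] F z
  flat : ∀ z, FlatModule R (F z)
  exact : ∀ z, Function.Exact (d (z + 1)) (d z)
  iso : Nonempty (M ≃ₗ[R] LinearMap.range (d (-1)))
  tensorExact : ∀ (I : Type u) [AddCommGroup I] [Module Rᵐᵒᵖ I], Module.Injective Rᵐᵒᵖ I →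
    ∀ z, Function.Exact (NCmap R I (d (z + 1))) (NCmap R I (d z))

/-- A left `R`-module is Gorenstein flat if it admits a complete flat resolution. -/
def IsGorensteinFlat (M : Type u) [AddCommGroup M] [Module R M] : Prop :=
  Nonempty (CompleteFlatResolution R M)

/-- A complete projective resolution witnessing that `M` is a Gorenstein projective left
`R`-module. -/
structure CompleteProjResolution (M : Type u) [AddCommGroup M] [Module R M] :
    Type (u + 1) where
  P : ℤ → ModuleCat.{u} R
  d : ∀ z : ℤ, P (z + 1) →ₗ[R] P z
  proj : ∀ z, Module.Projective R (P z)
  exact : ∀ z, Function.Exact (d (z + 1)) (d z)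
  iso : Nonempty (M ≃ₗ[R] LinearMap.range (d (-1)))
  homExact : ∀ (Q : Type u) [AddCommGroup Q] [Module R Q], Module.Projective R Q →
    ∀ z, Function.Exact (fun g : P z →ₗ[R] Q => g.comp (d z))
      (fun g : P (z + 1) →ₗ[R] Q => g.comp (d (z + 1)))

/-- A left `R`-module is Gorenstein projective if it admits a complete projective
resolution. -/
def IsGorensteinProjective (M : Type u) [AddCommGroup M] [Module R M] : Prop :=
  Nonempty (CompleteProjResolution R M)

/-- `gfdLE R n M` : the Gorenstein flat dimension of the left `R`-module `M` is at most
`n`, i.e. `M` has a resolution of length `n` by Gorenstein flat modules. -/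
def gfdLE : ℕ → ModuleCat.{u} R → Prop
  | 0, M => IsGorensteinFlat R M
  | n + 1, M => ∃ (G : ModuleCat.{u} R) (f : G →ₗ[R] M), Function.Surjective f ∧
      IsGorensteinFlat R G ∧ gfdLE n (ModuleCat.of R (LinearMap.ker f))

/-- `gpdLE R n M` : the Gorenstein projective dimension of `M` is at most `n`. -/
def gpdLE : ℕ → ModuleCat.{u} R → Prop
  | 0, M => IsGorensteinProjective R M
  | n + 1, M => ∃ (G : ModuleCat.{u} R) (f : G →ₗ[R] M), Function.Surjective f ∧
      IsGorensteinProjective R G ∧ gpdLE n (ModuleCat.of R (LinearMap.ker f))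

/-- `fdLE R n M` : the flat dimension of `M` is at most `n`. -/
def fdLE : ℕ → ModuleCat.{u} R → Prop
  | 0, M => FlatModule R M
  | n + 1, M => ∃ (G : ModuleCat.{u} R) (f : G →ₗ[R] M), Function.Surjective f ∧
      FlatModule R G ∧ fdLE n (ModuleCat.of R (LinearMap.ker f))

/-- `pdLE R n M` : the projective dimension of `M` is at most `n`. -/
def pdLE : ℕ → ModuleCat.{u} R → Prop
  | 0, M => Module.Projective R M
  | n + 1, M => ∃ (G : ModuleCat.{u} R) (f : G →ₗ[R] M), Function.Surjective f ∧
      Module.Projective R G ∧ pdLE n (ModuleCat.of R (LinearMap.ker f))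

/-- `idLE R n M` : the injective dimension of `M` is at most `n`. -/
def idLE : ℕ → ModuleCat.{u} R → Prop
  | 0, M => Module.Injective R M
  | n + 1, M => ∃ (I : ModuleCat.{u} R) (f : M →ₗ[R] I), Function.Injective f ∧
      Module.Injective R I ∧ idLE n (ModuleCat.of R (I ⧸ LinearMap.range f))

/-- Gorenstein flat dimension, valued in `ℕ∞`. -/
noncomputable def gfDim (M : ModuleCat.{u} R) : ℕ∞ :=
  sInf {n : ℕ∞ | ∃ k : ℕ, n = k ∧ gfdLE R k M}

/-- Flat dimension, valued in `ℕ∞`. -/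
noncomputable def flatDim (M : ModuleCat.{u} R) : ℕ∞ :=
  sInf {n : ℕ∞ | ∃ k : ℕ, n = k ∧ fdLE R k M}

/-- Injective dimension, valued in `ℕ∞`. -/
noncomputable def injDim (M : ModuleCat.{u} R) : ℕ∞ :=
  sInf {n : ℕ∞ | ∃ k : ℕ, n = k ∧ idLE R k M}

/-- The (left) weak Gorenstein global dimension of `R`:
the supremum of Gorenstein flat dimensions of all left `R`-modules. -/
noncomputable def wGgldim : ℕ∞ :=
  ⨆ M : ModuleCat.{u} R, gfDim R M

/-- `IFD R` : the supremum of flat dimensions of injective left `R`-modules. -/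
noncomputable def IFD : ℕ∞ :=
  ⨆ M : ModuleCat.{u} R, ⨆ (_ : Module.Injective R M), flatDim R M

/-- A ring is left coherent if every finitely generated left ideal is finitely
presented. -/
def LeftCoherent : Prop :=
  ∀ I : Submodule R R, I.FG → Module.FinitePresentation R I

/-- A ring is right coherent if every finitely generated right ideal is finitely
presented; right ideals are viewed as left ideals of `Rᵐᵒᵖ`. -/
def RightCoherent : Prop := LeftCoherent Rᵐᵒᵖ

end GDefs

/-- `TorVanishGT R n I M` : `Tor_i^R(I, M) = 0` for all `i > n`, expressed by saying that
for every projective resolution `P• → M` of left modules, the complex `I ⊗_R P•` obtained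
by tensoring with the right module `I` is exact at every spot of index `> n`. -/
noncomputable def TorVanishGT (R : Type u) [Ring R] (n : ℕ) (I : Type u) [AddCommGroup I]
    [Module Rᵐᵒᵖ I] (M : ModuleCat.{u} R) : Prop :=
  ∀ (P : ℕ → ModuleCat.{u} R) (d : ∀ i, P (i + 1) →ₗ[R] P i) (ε : P 0 →ₗ[R] M),
    (∀ i, Module.Projective R (P i)) → Function.Surjective ε →
    Function.Exact (d 0) ε → (∀ i, Function.Exact (d (i + 1)) (d i)) →
    ∀ j, n ≤ j → Function.Exact (NCmap R I (d (j + 1))) (NCmap R I (d j))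

section API

open MulOpposite

variable {R : Type u} [Ring R]

namespace NCTensor

variable {N M : Type u} [AddCommGroup N] [Module Rᵐᵒᵖ N] [AddCommGroup M] [Module R M]

/-- The class of `n ⊗ m` in `NCTensor R N M`. -/
noncomputable def mk (R : Type u) [Ring R] {N M : Type u} [AddCommGroup N] [Module Rᵐᵒᵖ N]
    [AddCommGroup M] [Module R M] (n : N) (m : M) : NCTensor R N M :=
  Submodule.Quotient.mk (n ⊗ₜ[ℤ] m)

theorem mk_add_left (n n' : N) (m : M) : mk R (n + n') m = mk R n m + mk R n' m := by
  show Submodule.Quotient.mk _ = _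
  rw [TensorProduct.add_tmul]
  rfl

theorem mk_add_right (n : N) (m m' : M) : mk R n (m + m') = mk R n m + mk R n m' := by
  show Submodule.Quotient.mk _ = _
  rw [TensorProduct.tmul_add]
  rfl

theorem mk_rel (r : R) (n : N) (m : M) : mk R (op r • n) m = mk R n (r • m) := by
  refine (Submodule.Quotient.eq _).2 ?_
  exact Submodule.subset_span ⟨n, r, m, rfl⟩

theorem ind {motive : NCTensor R N M → Prop} (zero : motive 0)
    (tmul : ∀ n m, motive (mk R n m))
    (add : ∀ x y, motive x → motive y → motive (x + y)) : ∀ t, motive t := by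
  intro t
  obtain ⟨x, rfl⟩ := Submodule.Quotient.mk_surjective _ t
  induction x using TensorProduct.induction_on with
  | zero => exact zero
  | tmul n m => exact tmul n m
  | add x y hx hy => rw [Submodule.Quotient.mk_add]; exact add _ _ hx hy

theorem NCmap_mk {M' : Type u} [AddCommGroup M'] [Module R M'] (f : M →ₗ[R] M') (n : N) (m : M) :
    NCmap R N f (mk R n m) = mk R n (f m) := by
  show Submodule.mapQ _ _ _ _ _ = _
  rw [mk]
  rfl

theorem NCmapL_mk {N' : Type u} [AddCommGroup N'] [Module Rᵐᵒᵖ N'] (f : N →ₗ[Rᵐᵒᵖ] N')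
    (n : N) (m : M) : NCmapL R M f (mk R n m) = mk R (f n) m := by
  show Submodule.mapQ _ _ _ _ _ = _
  rw [mk]
  rfl

theorem NCmap_surjective {M' : Type u} [AddCommGroup M'] [Module R M'] (f : M →ₗ[R] M')
    (hf : Function.Surjective f) : Function.Surjective (NCmap R N f) := by
  intro t
  induction t using ind with
  | zero => exact ⟨0, map_zero _⟩
  | tmul n m =>
    obtain ⟨m', rfl⟩ := hf m
    exact ⟨mk R n m', NCmap_mk _ _ _⟩
  | add x y hx hy =>
    obtain ⟨a, rfl⟩ := hx
    obtain ⟨b, rfl⟩ := hy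
    exact ⟨a + b, map_add _ _ _⟩

theorem NCmap_NCmap {M' M'' : Type u} [AddCommGroup M'] [Module R M'] [AddCommGroup M'']
    [Module R M''] (g : M' →ₗ[R] M'') (f : M →ₗ[R] M') (t : NCTensor R N M) :
    NCmap R N g (NCmap R N f t) = NCmap R N (g ∘ₗ f) t := by
  induction t using ind with
  | zero => simp
  | tmul n m => rw [NCmap_mk, NCmap_mk, NCmap_mk]; rfl
  | add x y hx hy => simp [map_add, hx, hy]

theorem NCmap_id (t : NCTensor R N M) : NCmap R N (LinearMap.id (M := M)) t = t := by
  induction t using ind with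
  | zero => simp
  | tmul n m => rw [NCmap_mk]; rfl
  | add x y hx hy => simp [map_add, hx, hy]

theorem NCmap_NCmapL {N' M' : Type u} [AddCommGroup N'] [Module Rᵐᵒᵖ N'] [AddCommGroup M']
    [Module R M'] (f : N →ₗ[Rᵐᵒᵖ] N') (g : M →ₗ[R] M') (t : NCTensor R N M) :
    NCmap R N' g (NCmapL R M f t) = NCmapL R M' f (NCmap R N g t) := by
  induction t using ind with
  | zero => simp
  | tmul n m => rw [NCmapL_mk, NCmap_mk, NCmap_mk, NCmapL_mk]
  | add x y hx hy => simp [map_add, hx, hy]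

end NCTensor

end API


section Part2

variable {R : Type u} [Ring R]

theorem flat_of_retract {I F : Type u} [AddCommGroup I] [Module R I] [AddCommGroup F] [Module R F]
    (hF : FlatModule R F) (i : I →ₗ[R] F) (p : F →ₗ[R] I) (hpi : ∀ x, p (i x) = x) :
    FlatModule R I := by
  intro N N' _ _ _ _ f hf a b hab
  have h1 : NCmapL R F f (NCmap R N i a) = NCmapL R F f (NCmap R N i b) := by
    rw [← NCTensor.NCmap_NCmapL, ← NCTensor.NCmap_NCmapL, hab]
  have h2 := hF N N' f hf h1
  have key : ∀ t : NCTensor R N I, NCmap R N p (NCmap R N i t) = t := by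
    intro t
    rw [NCTensor.NCmap_NCmap]
    have hpi' : p ∘ₗ i = LinearMap.id := LinearMap.ext hpi
    rw [hpi', NCTensor.NCmap_id]
  calc a = NCmap R N p (NCmap R N i a) := (key a).symm
    _ = NCmap R N p (NCmap R N i b) := by rw [h2]
    _ = b := key b

theorem flat_of_injective_of_gflat {I : Type u} [AddCommGroup I] [Module R I]
    (hInj : Module.Injective R I) (hG : IsGorensteinFlat R I) : FlatModule R I := by
  obtain ⟨c⟩ := hG
  obtain ⟨e⟩ := c.iso
  set emb : I →ₗ[R] c.F (-1) := (LinearMap.range (c.d (-1))).subtype ∘ₗ e.toLinearMap with hembdef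
  have hemb : Function.Injective emb := (Submodule.injective_subtype _).comp e.injective
  obtain ⟨p, hp⟩ := hInj.out emb hemb LinearMap.id
  exact flat_of_retract (c.flat (-1)) emb p hp

end Part2


section Characters

open MulOpposite NCTensor

/-- The circle group `ℚ/ℤ`, an injective cogenerator of abelian groups. -/
abbrev QZmod : Type := AddCircle (1 : ℚ)

theorem char_extend {X Y : Type u} [AddCommGroup X] [AddCommGroup Y] (j : X →ₗ[ℤ] Y)
    (hj : Function.Injective j) (χ : X →+ QZmod) :
    ∃ χ' : Y →+ QZmod, ∀ x, χ' (j x) = χ x := by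
  obtain ⟨χ', hχ'⟩ := CharacterModule.dual_surjective_of_injective j hj χ
  exact ⟨χ', fun x => by rw [← hχ']; rfl⟩

theorem char_separate {X : Type u} [AddCommGroup X] {x : X} (hx : x ≠ 0) :
    ∃ χ : X →+ QZmod, χ x ≠ 0 := by
  obtain ⟨c, hc⟩ := CharacterModule.exists_character_apply_ne_zero_of_ne_zero hx
  exact ⟨c, hc⟩

variable {R : Type u} [Ring R]

/-- A balanced pairing induces a character of the tensor product. -/
noncomputable def pairChar {N M : Type u} [AddCommGroup N] [Module Rᵐᵒᵖ N] [AddCommGroup M]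
    [Module R M] (p : N →+ M →+ QZmod)
    (hp : ∀ (r : R) (n : N) (m : M), p (op r • n) m = p n (r • m)) :
    NCTensor R N M →+ QZmod :=
  (Submodule.liftQ (NCRel R N M)
    (TensorProduct.liftAddHom p (fun z n m => by simp)).toIntLinearMap
    (by
      rw [NCRel, Submodule.span_le]
      rintro t ⟨n, r, m, rfl⟩
      simp [LinearMap.mem_ker, hp r n m])).toAddMonoidHom

theorem pairChar_mk {N M : Type u} [AddCommGroup N] [Module Rᵐᵒᵖ N] [AddCommGroup M]
    [Module R M] (p : N →+ M →+ QZmod) (hp : ∀ (r : R) (n : N) (m : M), p (op r • n) m = p n (r • m))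
    (n : N) (m : M) : pairChar p hp (mk R n m) = p n m := rfl

/-- Character module of a left `R`-module, as a right `R`-module. -/
def CharR (R : Type u) [Ring R] (M : Type u) [AddCommGroup M] [Module R M] : Type u :=
  M →+ QZmod

namespace CharR

variable {M : Type u} [AddCommGroup M] [Module R M]

instance : AddCommGroup (CharR R M) := inferInstanceAs (AddCommGroup (M →+ QZmod))
instance : FunLike (CharR R M) M QZmod := inferInstanceAs (FunLike (M →+ QZmod) M QZmod)
instance : AddMonoidHomClass (CharR R M) M QZmod :=
  inferInstanceAs (AddMonoidHomClass (M →+ QZmod) M QZmod)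

@[ext] theorem ext {c c' : CharR R M} (h : ∀ m, c m = c' m) : c = c' := DFunLike.ext _ _ h

instance : SMul Rᵐᵒᵖ (CharR R M) :=
  ⟨fun s ξ => (show M →+ QZmod from ξ).comp (DistribMulAction.toAddMonoidHom M s.unop)⟩

@[simp] theorem smul_apply (s : Rᵐᵒᵖ) (ξ : CharR R M) (m : M) : (s • ξ) m = ξ (s.unop • m) := rfl

@[simp] theorem add_apply (ξ ζ : CharR R M) (m : M) : (ξ + ζ) m = ξ m + ζ m := rfl
@[simp] theorem sub_apply (ξ ζ : CharR R M) (m : M) : (ξ - ζ) m = ξ m - ζ m := rfl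
@[simp] theorem zero_apply (m : M) : (0 : CharR R M) m = 0 := rfl

instance : Module Rᵐᵒᵖ (CharR R M) where
  one_smul ξ := by ext m; simp
  mul_smul s t ξ := by ext m; simp [mul_smul]
  smul_zero s := by ext m; simp
  smul_add s ξ ζ := by ext m; simp
  add_smul s t ξ := by ext m; simp [add_smul]
  zero_smul ξ := by ext m; simp

/-- The dual of a map of left modules. -/
noncomputable def dual {A B : Type u} [AddCommGroup A] [Module R A] [AddCommGroup B]
    [Module R B] (g : A →ₗ[R] B) : CharR R B →ₗ[Rᵐᵒᵖ] CharR R A where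
  toFun ξ := (show B →+ QZmod from ξ).comp g.toAddMonoidHom
  map_add' _ _ := rfl
  map_smul' s ξ := by ext a; exact (congrArg ξ (g.map_smul s.unop a)).symm

@[simp] theorem dual_apply {A B : Type u} [AddCommGroup A] [Module R A] [AddCommGroup B]
    [Module R B] (g : A →ₗ[R] B) (ξ : CharR R B) (a : A) : dual g ξ a = ξ (g a) := rfl

end CharR

/-- Character module of a right `R`-module, as a left `R`-module. -/
def CharL (R : Type u) [Ring R] (A : Type u) [AddCommGroup A] [Module Rᵐᵒᵖ A] : Type u :=
  A →+ QZmod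

namespace CharL

variable {A : Type u} [AddCommGroup A] [Module Rᵐᵒᵖ A]

instance : AddCommGroup (CharL R A) := inferInstanceAs (AddCommGroup (A →+ QZmod))
instance : FunLike (CharL R A) A QZmod := inferInstanceAs (FunLike (A →+ QZmod) A QZmod)
instance : AddMonoidHomClass (CharL R A) A QZmod :=
  inferInstanceAs (AddMonoidHomClass (A →+ QZmod) A QZmod)

@[ext] theorem ext {c c' : CharL R A} (h : ∀ a, c a = c' a) : c = c' := DFunLike.ext _ _ h

instance : SMul R (CharL R A) :=
  ⟨fun r ξ => (show A →+ QZmod from ξ).comp (DistribMulAction.toAddMonoidHom A (op r))⟩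

@[simp] theorem smul_apply (r : R) (ξ : CharL R A) (a : A) : (r • ξ) a = ξ (op r • a) := rfl

@[simp] theorem add_apply (ξ ζ : CharL R A) (a : A) : (ξ + ζ) a = ξ a + ζ a := rfl
@[simp] theorem sub_apply (ξ ζ : CharL R A) (a : A) : (ξ - ζ) a = ξ a - ζ a := rfl
@[simp] theorem zero_apply (a : A) : (0 : CharL R A) a = 0 := rfl

instance : Module R (CharL R A) where
  one_smul ξ := by ext a; simp
  mul_smul r s ξ := by ext a; simp [op_mul, mul_smul]
  smul_zero r := by ext a; simp
  smul_add r ξ ζ := by ext a; simp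
  add_smul r s ξ := by ext a; simp [add_smul]
  zero_smul ξ := by ext a; simp

end CharL

variable {I : Type u} [AddCommGroup I] [Module Rᵐᵒᵖ I]

/-- A character of `I ⊗ X` yields a left-module map `X → I⁺`. -/
noncomputable def charToHom {X : Type u} [AddCommGroup X] [Module R X]
    (χ : NCTensor R I X →+ QZmod) : X →ₗ[R] CharL R I where
  toFun x := show I →+ QZmod from
    AddMonoidHom.mk' (fun i => χ (mk R i x)) (fun i i' => by
      show χ (mk R (i + i') x) = χ (mk R i x) + χ (mk R i' x); rw [mk_add_left, map_add])
  map_add' x x' := by ext i; show χ (mk R i (x + x')) = χ (mk R i x) + χ (mk R i x')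
                      rw [mk_add_right, map_add]
  map_smul' r x := by
    ext i
    show χ (mk R i (r • x)) = χ (mk R (op r • i) x)
    rw [mk_rel]

@[simp] theorem charToHom_apply {X : Type u} [AddCommGroup X] [Module R X]
    (χ : NCTensor R I X →+ QZmod) (x : X) (i : I) : charToHom χ x i = χ (mk R i x) := rfl

/-- A left-module map `X → I⁺` yields a character of `I ⊗ X`. -/
noncomputable def homToChar {X : Type u} [AddCommGroup X] [Module R X]
    (φ : X →ₗ[R] CharL R I) : NCTensor R I X →+ QZmod :=
  pairChar
    (AddMonoidHom.mk'
      (fun i => AddMonoidHom.mk' (fun x => φ x i) (fun x x' => by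
        show φ (x + x') i = φ x i + φ x' i; rw [map_add]; rfl))
      (fun i i' => by ext x; exact map_add (show I →+ QZmod from φ x) i i'))
    (fun r i x => by
      show φ x (op r • i) = φ (r • x) i
      rw [φ.map_smul r x]; rfl)

@[simp] theorem homToChar_mk {X : Type u} [AddCommGroup X] [Module R X]
    (φ : X →ₗ[R] CharL R I) (i : I) (x : X) : homToChar φ (mk R i x) = φ x i :=
  pairChar_mk _ _ _ _

/-- A character of `Y ⊗ M` yields a right-module map `Y → M⁺`. -/
noncomputable def charToHomL {Y M : Type u} [AddCommGroup Y] [Module Rᵐᵒᵖ Y] [AddCommGroup M]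
    [Module R M] (χ : NCTensor R Y M →+ QZmod) : Y →ₗ[Rᵐᵒᵖ] CharR R M where
  toFun y := show M →+ QZmod from
    AddMonoidHom.mk' (fun m => χ (mk R y m)) (fun m m' => by
      show χ (mk R y (m + m')) = χ (mk R y m) + χ (mk R y m'); rw [mk_add_right, map_add])
  map_add' y y' := by ext m; show χ (mk R (y + y') m) = χ (mk R y m) + χ (mk R y' m)
                      rw [mk_add_left, map_add]
  map_smul' s y := by
    ext m
    show χ (mk R (op s.unop • y) m) = χ (mk R y (s.unop • m))
    rw [mk_rel]

@[simp] theorem charToHomL_apply {Y M : Type u} [AddCommGroup Y] [Module Rᵐᵒᵖ Y] [AddCommGroup M]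
    [Module R M] (χ : NCTensor R Y M →+ QZmod) (y : Y) (m : M) :
    charToHomL χ y m = χ (mk R y m) := rfl

/-- A right-module map `Y → M⁺` yields a character of `Y ⊗ M`. -/
noncomputable def homToCharL {Y M : Type u} [AddCommGroup Y] [Module Rᵐᵒᵖ Y] [AddCommGroup M]
    [Module R M] (g : Y →ₗ[Rᵐᵒᵖ] CharR R M) : NCTensor R Y M →+ QZmod :=
  pairChar
    (AddMonoidHom.mk' (fun y => show M →+ QZmod from g y)
      (fun y y' => by
        ext m; show g (y + y') m = g y m + g y' m; rw [g.map_add]; rfl))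
    (fun r y m => by
      show g (op r • y) m = g y (r • m)
      rw [g.map_smul (op r) y]; rfl)

@[simp] theorem homToCharL_mk {Y M : Type u} [AddCommGroup Y] [Module Rᵐᵒᵖ Y] [AddCommGroup M]
    [Module R M] (g : Y →ₗ[Rᵐᵒᵖ] CharR R M) (y : Y) (m : M) :
    homToCharL g (mk R y m) = g y m :=
  pairChar_mk _ _ _ _

end Characters


section Factor

open MulOpposite NCTensor

theorem exists_factor_linear {S : Type*} [Ring S] {A B C : Type*} [AddCommGroup A]
    [AddCommGroup B] [AddCommGroup C] [Module S A] [Module S B] [Module S C]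
    (β : A →ₗ[S] B) (hβ : Function.Surjective β) (ψ : A →ₗ[S] C)
    (hker : ∀ a, β a = 0 → ψ a = 0) : ∃ χ : B →ₗ[S] C, ∀ a, χ (β a) = ψ a := by
  have key : ∀ a a', β a = β a' → ψ a = ψ a' := by
    intro a a' hh
    have h2 : ψ (a - a') = 0 := hker _ (by rw [map_sub, hh, sub_self])
    rw [map_sub, sub_eq_zero] at h2; exact h2
  refine ⟨{ toFun := fun b => ψ (Function.surjInv hβ b)
            map_add' := ?_
            map_smul' := ?_ }, ?_⟩
  · intro b b'
    have h1 : β (Function.surjInv hβ (b + b')) =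
        β (Function.surjInv hβ b + Function.surjInv hβ b') := by
      rw [map_add, Function.surjInv_eq hβ, Function.surjInv_eq hβ, Function.surjInv_eq hβ]
    show ψ _ = ψ _ + ψ _
    rw [key _ _ h1, map_add]
  · intro s b
    have h1 : β (Function.surjInv hβ (s • b)) = β (s • Function.surjInv hβ b) := by
      rw [map_smul, Function.surjInv_eq hβ, Function.surjInv_eq hβ]
    show ψ _ = s • ψ _
    rw [key _ _ h1, map_smul]
  · intro a
    exact key _ _ (Function.surjInv_eq hβ (β a))

theorem exists_factor_addHom {A B : Type*} [AddCommGroup A] [AddCommGroup B]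
    (β : A →+ B) (hβ : Function.Surjective β) (ξ : A →+ QZmod)
    (hker : ∀ a, β a = 0 → ξ a = 0) : ∃ η : B →+ QZmod, ∀ a, η (β a) = ξ a := by
  have key : ∀ a a', β a = β a' → ξ a = ξ a' := by
    intro a a' hh
    have h2 : ξ (a - a') = 0 := hker _ (by rw [map_sub, hh, sub_self])
    rw [map_sub, sub_eq_zero] at h2; exact h2
  refine ⟨AddMonoidHom.mk' (fun b => ξ (Function.surjInv hβ b)) ?_, ?_⟩
  · intro b b'
    have h1 : β (Function.surjInv hβ (b + b')) =
        β (Function.surjInv hβ b + Function.surjInv hβ b') := by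
      rw [map_add, Function.surjInv_eq hβ, Function.surjInv_eq hβ, Function.surjInv_eq hβ]
    show ξ _ = ξ _ + ξ _
    rw [key _ _ h1, map_add]
  · intro a
    exact key _ _ (Function.surjInv_eq hβ (β a))

variable {R : Type u} [Ring R]

/-- Lambek's lemma: the character module of a flat left module is an injective
right module. -/
theorem charR_flat_injective {F : Type u} [AddCommGroup F] [Module R F] (hF : FlatModule R F)
    {X Y : Type u} [AddCommGroup X] [Module Rᵐᵒᵖ X] [AddCommGroup Y] [Module Rᵐᵒᵖ Y]
    (j : X →ₗ[Rᵐᵒᵖ] Y) (hj : Function.Injective j) (g : X →ₗ[Rᵐᵒᵖ] CharR R F) :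
    ∃ h : Y →ₗ[Rᵐᵒᵖ] CharR R F, ∀ x, h (j x) = g x := by
  have hinj : Function.Injective (NCmapL R F j) := hF X Y j hj
  obtain ⟨χY, hχY⟩ := char_extend (NCmapL R F j) hinj (homToCharL g)
  refine ⟨charToHomL χY, fun x => ?_⟩
  ext m
  show χY (mk R (j x) m) = g x m
  have h3 : NCmapL R F j (mk R x m) = mk R (j x) m := NCTensor.NCmapL_mk j x m
  rw [← h3, hχY, homToCharL_mk]

end Factor


section Main

open MulOpposite NCTensor

variable {R : Type u} [Ring R]

theorem NCmap_zero_map {N M M' : Type u} [AddCommGroup N] [Module Rᵐᵒᵖ N] [AddCommGroup M]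
    [Module R M] [AddCommGroup M'] [Module R M'] (t : NCTensor R N M) :
    NCmap R N (0 : M →ₗ[R] M') t = 0 := by
  induction t using NCTensor.ind with
  | zero => simp
  | tmul n m =>
    rw [NCmap_mk]
    show Submodule.Quotient.mk _ = _
    rw [show (0 : M →ₗ[R] M') m = 0 from rfl, TensorProduct.tmul_zero]
    rfl
  | add x y hx hy => rw [map_add, hx, hy, add_zero]

/-- The key extension lemma: if every left `R`-module is Gorenstein flat and `I` is an
injective right `R`-module, then every map into `I⁺` extends along injections. -/
theorem hom_extend_of_gflat (h : ∀ M : ModuleCat.{u} R, IsGorensteinFlat R ↥M)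
    {I : Type u} [AddCommGroup I] [Module Rᵐᵒᵖ I] (hI : Module.Injective Rᵐᵒᵖ I)
    {N N' : Type u} [AddCommGroup N] [Module R N] [AddCommGroup N'] [Module R N']
    (f : N →ₗ[R] N') (hf : Function.Injective f) (φ : N →ₗ[R] CharL R I) :
    ∃ ψ : N' →ₗ[R] CharL R I, ∀ n, ψ (f n) = φ n := by
  classical
  set C' := ModuleCat.of R (N' ⧸ LinearMap.range f) with hC'
  obtain ⟨c⟩ := h C'
  obtain ⟨e⟩ := c.iso
  set F0 : Type u := ↥(c.F (-1 + 1)) with hF0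
  set K : Submodule R F0 := LinearMap.ker (c.d (-1)) with hK
  set q : N' →ₗ[R] ↥C' := (LinearMap.range f).mkQ with hq
  have hqsurj : Function.Surjective q := Submodule.mkQ_surjective _
  set π : F0 →ₗ[R] ↥C' := e.symm.toLinearMap ∘ₗ (c.d (-1)).rangeRestrict with hπ
  have hπsurj : Function.Surjective π :=
    e.symm.surjective.comp (LinearMap.surjective_rangeRestrict _)
  have hπ0 : ∀ x : F0, π x = 0 ↔ c.d (-1) x = 0 := by
    intro x
    rw [show π x = e.symm ((c.d (-1)).rangeRestrict x) from rfl,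
      LinearEquiv.map_eq_zero_iff]
    constructor
    · intro hh; exact congrArg Subtype.val hh
    · intro hh; exact Subtype.ext hh
  -- Claim A : I ⊗ K → I ⊗ F0 is injective
  have claimA : Function.Injective (NCmap R I K.subtype) := by
    rw [injective_iff_map_eq_zero]
    intro x hx
    have hrange : ∀ k : F0, k ∈ K → ∃ w, c.d (-1 + 1) w = k := by
      intro k hk
      exact (c.exact (-1) k).mp hk
    set p : c.F (-1 + 1 + 1) →ₗ[R] K :=
      LinearMap.codRestrict K (c.d (-1 + 1)) (fun w => by
        show c.d (-1) (c.d (-1 + 1) w) = 0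
        exact (c.exact (-1)).apply_apply_eq_zero w) with hp
    have hpsurj : Function.Surjective p := by
      intro k
      obtain ⟨w, hw⟩ := hrange k.1 k.2
      exact ⟨w, Subtype.ext hw⟩
    obtain ⟨y, rfl⟩ := NCTensor.NCmap_surjective p hpsurj x
    rw [NCTensor.NCmap_NCmap] at hx
    have hιp : K.subtype ∘ₗ p = c.d (-1 + 1) := LinearMap.subtype_comp_codRestrict _ _ _
    rw [hιp] at hx
    obtain ⟨w, hw⟩ := (c.tensorExact I hI (-1 + 1) y).mp hx
    rw [← hw, NCTensor.NCmap_NCmap]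
    have hpd : p ∘ₗ c.d (-1 + 1 + 1) = 0 :=
      LinearMap.ext fun v => Subtype.ext
        (show c.d (-1 + 1) (c.d (-1 + 1 + 1) v) = 0 from
          (c.exact (-1 + 1)).apply_apply_eq_zero v)
    rw [hpd]
    exact NCmap_zero_map w
  -- step 2 : maps K → I⁺ extend to F0
  have charext : ∀ φk : K →ₗ[R] CharL R I,
      ∃ θ : F0 →ₗ[R] CharL R I, ∀ k : K, θ (K.subtype k) = φk k := by
    intro φk
    obtain ⟨χF, hχF⟩ := char_extend (NCmap R I K.subtype) claimA (homToChar φk)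
    refine ⟨charToHom χF, fun k => ?_⟩
    ext i
    show χF (mk R i (K.subtype k)) = φk k i
    have h1 : NCmap R I K.subtype (mk R i k) = mk R i (K.subtype k) := NCmap_mk _ _ _
    rw [← h1, hχF, homToChar_mk]
  -- the pullback D
  set D : Submodule R (N' × F0) :=
    LinearMap.ker (q ∘ₗ LinearMap.fst R N' F0 - π ∘ₗ LinearMap.snd R N' F0) with hD
  have hmemD : ∀ z : N' × F0, z ∈ D ↔ q z.1 - π z.2 = 0 := fun z => Iff.rfl
  set ν : N →ₗ[R] ↥D := LinearMap.codRestrict D (f.prod 0) (fun n => (hmemD _).mpr (by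
    show q (f n) - π 0 = 0
    have hq0 : q (f n) = 0 := (Submodule.Quotient.mk_eq_zero _).mpr (LinearMap.mem_range_self f n)
    rw [hq0, map_zero, sub_zero])) with hνdef
  set kb : K →ₗ[R] ↥D := LinearMap.codRestrict D ((0 : K →ₗ[R] N').prod K.subtype)
    (fun k => (hmemD _).mpr (by
      show q 0 - π (K.subtype k) = 0
      rw [map_zero, show π (K.subtype k) = 0 from (hπ0 (K.subtype k)).mpr k.2, sub_zero]))
    with hkbdef
  set α : ↥D →ₗ[R] F0 := (LinearMap.snd R N' F0) ∘ₗ D.subtype with hαdef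
  set β : ↥D →ₗ[R] N' := (LinearMap.fst R N' F0) ∘ₗ D.subtype with hβdef
  have hβsurj : Function.Surjective β := by
    intro n'
    obtain ⟨x, hx⟩ := hπsurj (q n')
    exact ⟨⟨(n', x), (hmemD _).mpr (by show q n' - π x = 0; rw [hx, sub_self])⟩, rfl⟩
  have hνinj : Function.Injective ν := by
    intro a b hab
    have h1 : ((ν a : N' × F0)).1 = ((ν b : N' × F0)).1 :=
      congrArg (fun z : ↥D => (z : N' × F0).1) hab
    exact hf h1
  have hαsurj : Function.Surjective α := by
    intro x
    obtain ⟨n', hn'⟩ := hqsurj (π x)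
    exact ⟨⟨(n', x), (hmemD _).mpr (by show q n' - π x = 0; rw [hn', sub_self])⟩, rfl⟩
  have hkerβ : ∀ dd : ↥D, β dd = 0 → ∃ k, kb k = dd := by
    intro dd hdd
    have h1 : (dd : N' × F0).1 = 0 := hdd
    have h2 : q (dd : N' × F0).1 - π (dd : N' × F0).2 = 0 := (hmemD _).mp dd.2
    rw [h1, map_zero, zero_sub, neg_eq_zero] at h2
    have hk : (dd : N' × F0).2 ∈ K := (hπ0 _).mp h2
    refine ⟨⟨_, hk⟩, ?_⟩
    apply Subtype.ext
    refine Prod.ext ?_ ?_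
    · show (0 : N') = _; rw [h1]
    · rfl
  have hkerα : ∀ dd : ↥D, α dd = 0 → ∃ n, ν n = dd := by
    intro dd hdd
    have h2 : q (dd : N' × F0).1 - π (dd : N' × F0).2 = 0 := (hmemD _).mp dd.2
    have h1 : (dd : N' × F0).2 = 0 := hdd
    rw [h1, map_zero, sub_zero, hq] at h2
    obtain ⟨n, hn⟩ := (Submodule.Quotient.mk_eq_zero _).mp h2
    refine ⟨n, Subtype.ext (Prod.ext ?_ ?_)⟩
    · show f n = _; rw [hn]
    · show (0 : F0) = _; rw [h1]
  -- dual maps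
  have hνdsurj : Function.Surjective (CharR.dual (R := R) ν) := by
    intro ξ
    obtain ⟨ξ', hξ'⟩ := char_extend ν.toAddMonoidHom.toIntLinearMap
      (fun a b hab => hνinj hab) (show N →+ QZmod from ξ)
    refine ⟨show CharR R ↥D from ξ', ?_⟩
    ext n
    show ξ' (ν n) = ξ n
    exact hξ' n
  have hkerνd : ∀ ξ : CharR R ↥D, CharR.dual (R := R) ν ξ = 0 →
      ∃ η : CharR R F0, CharR.dual (R := R) α η = ξ := by
    intro ξ hξ
    obtain ⟨η, hη⟩ := exists_factor_addHom α.toAddMonoidHom hαsurj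
      (show ↥D →+ QZmod from ξ) (by
        intro dd hdd
        obtain ⟨n, rfl⟩ := hkerα dd hdd
        exact DFunLike.congr_fun hξ n)
    refine ⟨show CharR R F0 from η, ?_⟩
    ext dd
    show η (α dd) = ξ dd
    exact hη dd
  set φh : I →ₗ[Rᵐᵒᵖ] CharR R N := charToHomL (homToChar φ) with hφh
  -- the dual pullback P
  set P : Submodule Rᵐᵒᵖ (CharR R ↥D × I) :=
    LinearMap.ker ((CharR.dual (R := R) ν) ∘ₗ LinearMap.fst Rᵐᵒᵖ (CharR R ↥D) I
      - φh ∘ₗ LinearMap.snd Rᵐᵒᵖ (CharR R ↥D) I) with hP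
  have hmemP : ∀ z : CharR R ↥D × I, z ∈ P ↔ CharR.dual (R := R) ν z.1 - φh z.2 = 0 :=
    fun z => Iff.rfl
  set pr1 : ↥P →ₗ[Rᵐᵒᵖ] CharR R ↥D := (LinearMap.fst Rᵐᵒᵖ (CharR R ↥D) I) ∘ₗ P.subtype
    with hpr1
  set pr2 : ↥P →ₗ[Rᵐᵒᵖ] I := (LinearMap.snd Rᵐᵒᵖ (CharR R ↥D) I) ∘ₗ P.subtype with hpr2
  set κ : CharR R F0 →ₗ[Rᵐᵒᵖ] ↥P := LinearMap.codRestrict P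
    ((CharR.dual (R := R) α).prod 0) (fun η => (hmemP _).mpr (by
      show CharR.dual (R := R) ν (CharR.dual (R := R) α η) - φh 0 = 0
      rw [map_zero]
      have hz : CharR.dual (R := R) ν (CharR.dual (R := R) α η) = 0 := by
        ext n
        show η (α (ν n)) = 0
        rw [show α (ν n) = (0 : F0) from rfl, map_zero]
      rw [hz, sub_zero])) with hκdef
  have hκinj : Function.Injective κ := by
    intro η η' hh
    have h1 : CharR.dual (R := R) α η = CharR.dual (R := R) α η' :=
      congrArg (fun z : ↥P => (z : CharR R ↥D × I).1) hh
    ext x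
    obtain ⟨dd, rfl⟩ := hαsurj x
    exact DFunLike.congr_fun h1 dd
  have hpr2surj : Function.Surjective pr2 := by
    intro i
    obtain ⟨ξ, hξ⟩ := hνdsurj (φh i)
    exact ⟨⟨(ξ, i), (hmemP _).mpr
      (by show CharR.dual (R := R) ν ξ - φh i = 0; rw [hξ, sub_self])⟩, rfl⟩
  have hkerpr2 : ∀ pp : ↥P, pr2 pp = 0 → ∃ η, κ η = pp := by
    intro pp hpp
    have h2 : CharR.dual (R := R) ν (pp : CharR R ↥D × I).1 - φh (pp : CharR R ↥D × I).2 = 0 :=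
      (hmemP _).mp pp.2
    have h1 : (pp : CharR R ↥D × I).2 = 0 := hpp
    rw [h1, map_zero, sub_zero] at h2
    obtain ⟨η, hη⟩ := hkerνd _ h2
    refine ⟨η, Subtype.ext (Prod.ext ?_ ?_)⟩
    · show CharR.dual (R := R) α η = _; rw [hη]
    · show (0 : I) = _; rw [h1]
  obtain ⟨r, hr⟩ := charR_flat_injective (c.flat (-1 + 1)) κ hκinj LinearMap.id
  set w : ↥P →ₗ[Rᵐᵒᵖ] CharR R ↥D := pr1 - (CharR.dual (R := R) α) ∘ₗ r with hwdef
  have hwker : ∀ pp, pr2 pp = 0 → w pp = 0 := by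
    intro pp hpp
    obtain ⟨η, rfl⟩ := hkerpr2 pp hpp
    show pr1 (κ η) - CharR.dual (R := R) α (r (κ η)) = 0
    rw [hr]
    rw [show pr1 (κ η) = CharR.dual (R := R) α η from rfl]
    exact sub_self _
  obtain ⟨l, hl⟩ := exists_factor_linear pr2 hpr2surj w hwker
  have hllift : ∀ i, CharR.dual (R := R) ν (l i) = φh i := by
    intro i
    obtain ⟨pp, rfl⟩ := hpr2surj i
    rw [hl]
    show CharR.dual (R := R) ν (pr1 pp - CharR.dual (R := R) α (r pp)) = φh (pr2 pp)
    rw [map_sub]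
    have h3 : CharR.dual (R := R) ν (CharR.dual (R := R) α (r pp)) = 0 := by
      ext n
      show (r pp) (α (ν n)) = 0
      rw [show α (ν n) = (0 : F0) from rfl, map_zero]
    rw [h3, sub_zero]
    have h4 : CharR.dual (R := R) ν (pp : CharR R ↥D × I).1 - φh (pp : CharR R ↥D × I).2 = 0 :=
      (hmemP _).mp pp.2
    rw [sub_eq_zero] at h4
    exact h4
  -- descend to N'
  set ψ0 : ↥D →ₗ[R] CharL R I := charToHom (homToCharL l) with hψ0
  have hψ0ν : ∀ n, ψ0 (ν n) = φ n := by
    intro n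
    ext i
    show l i (ν n) = φ n i
    have h5 := DFunLike.congr_fun (hllift i) n
    exact h5.trans (homToChar_mk φ i n)
  obtain ⟨θ, hθ⟩ := charext (ψ0 ∘ₗ kb)
  set ψ' : ↥D →ₗ[R] CharL R I := ψ0 - θ ∘ₗ α with hψ'def
  have hψ'ker : ∀ dd, β dd = 0 → ψ' dd = 0 := by
    intro dd hdd
    obtain ⟨k, rfl⟩ := hkerβ dd hdd
    show ψ0 (kb k) - θ (α (kb k)) = 0
    rw [show α (kb k) = K.subtype k from rfl, hθ k]
    exact sub_self _
  obtain ⟨ψ, hψ⟩ := exists_factor_linear β hβsurj ψ' hψ'ker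
  refine ⟨ψ, fun n => ?_⟩
  rw [show f n = β (ν n) from rfl, hψ]
  show ψ0 (ν n) - θ (α (ν n)) = φ n
  rw [show α (ν n) = (0 : F0) from rfl, map_zero, sub_zero, hψ0ν]

end Main


section Core

open MulOpposite NCTensor

variable {R : Type u} [Ring R]

theorem NCmap_injective_of_gflat (h : ∀ M : ModuleCat.{u} R, IsGorensteinFlat R ↥M)
    {I : Type u} [AddCommGroup I] [Module Rᵐᵒᵖ I] (hI : Module.Injective Rᵐᵒᵖ I)
    {N N' : Type u} [AddCommGroup N] [Module R N] [AddCommGroup N'] [Module R N']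
    (f : N →ₗ[R] N') (hf : Function.Injective f) :
    Function.Injective (NCmap R I f) := by
  rw [injective_iff_map_eq_zero]
  intro t ht
  by_contra hne
  obtain ⟨χ₀, hχ₀⟩ := char_separate hne
  obtain ⟨ψ, hψ⟩ := hom_extend_of_gflat h hI f hf (charToHom χ₀)
  have key : ∀ s : NCTensor R I N, homToChar ψ (NCmap R I f s) = χ₀ s := by
    intro s
    induction s using NCTensor.ind with
    | zero => simp
    | tmul i n =>
      rw [NCmap_mk, homToChar_mk, hψ n]
      rfl
    | add x y hx hy => rw [map_add, map_add, map_add, hx, hy]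
  have hz := key t
  rw [ht, map_zero] at hz
  exact hχ₀ hz.symm

/-- `r ↦ op (op r)` as a ring homomorphism. -/
def opopRingHom (R : Type u) [Ring R] : R →+* Rᵐᵒᵖᵐᵒᵖ where
  toFun r := op (op r)
  map_one' := rfl
  map_mul' _ _ := rfl
  map_zero' := rfl
  map_add' _ _ := rfl

/-- Commutativity transfer between the two orientations of the tensor product. -/
noncomputable def transferEquiv {N I : Type u} [AddCommGroup N] [Module Rᵐᵒᵖᵐᵒᵖ N]
    [Module R N] [AddCommGroup I] [Module Rᵐᵒᵖ I]
    (hcomp : ∀ (r : R) (n : N), r • n = op (op r) • n) :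
    NCTensor Rᵐᵒᵖ N I ≃ₗ[ℤ] NCTensor R I N :=
  Submodule.Quotient.equiv (NCRel Rᵐᵒᵖ N I) (NCRel R I N)
    (TensorProduct.comm ℤ N I) (by
      apply le_antisymm
      · rw [Submodule.map_le_iff_le_comap, NCRel, Submodule.span_le]
        rintro t ⟨n, r', i, rfl⟩
        rw [SetLike.mem_coe, Submodule.mem_comap]
        have hgen : ((op (unop r') • i) ⊗ₜ[ℤ] n - i ⊗ₜ[ℤ] ((unop r') • n)) ∈ NCRel R I N :=
          Submodule.subset_span ⟨i, unop r', n, rfl⟩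
        have heq : (TensorProduct.comm ℤ N I) ((op r' • n) ⊗ₜ[ℤ] i - n ⊗ₜ[ℤ] (r' • i)) =
            -((op (unop r') • i) ⊗ₜ[ℤ] n - i ⊗ₜ[ℤ] ((unop r') • n)) := by
          rw [map_sub, TensorProduct.comm_tmul, TensorProduct.comm_tmul, neg_sub,
            hcomp (unop r') n, op_unop]
        refine (congrArg (· ∈ NCRel R I N) heq).mpr ?_
        exact Submodule.neg_mem _ hgen
      · rw [show NCRel R I N = Submodule.span ℤ { t | ∃ (i : I) (s : R) (n : N),
            t = (op s • i) ⊗ₜ[ℤ] n - i ⊗ₜ[ℤ] (s • n) } from rfl, Submodule.span_le]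
        rintro t ⟨i, s, n, rfl⟩
        rw [SetLike.mem_coe, Submodule.mem_map]
        refine ⟨-((op (op s) • n) ⊗ₜ[ℤ] i - n ⊗ₜ[ℤ] (op s • i)),
          Submodule.neg_mem _ (Submodule.subset_span ⟨n, op s, i, rfl⟩), ?_⟩
        rw [map_neg, map_sub]
        exact (congrArg Neg.neg (congrArg₂ (· - ·) (TensorProduct.comm_tmul ℤ N I _ _)
          (TensorProduct.comm_tmul ℤ N I _ _))).trans (by rw [neg_sub, ← hcomp s n]))

theorem transferEquiv_mk {N I : Type u} [AddCommGroup N] [Module Rᵐᵒᵖᵐᵒᵖ N]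
    [Module R N] [AddCommGroup I] [Module Rᵐᵒᵖ I]
    (hcomp : ∀ (r : R) (n : N), r • n = op (op r) • n) (n : N) (i : I) :
    transferEquiv hcomp (mk Rᵐᵒᵖ n i) = mk R i n := rfl

theorem flatModule_op_of_gflat (h : ∀ M : ModuleCat.{u} R, IsGorensteinFlat R ↥M)
    {I : Type u} [AddCommGroup I] [Module Rᵐᵒᵖ I] (hI : Module.Injective Rᵐᵒᵖ I) :
    FlatModule Rᵐᵒᵖ I := by
  intro N N' _ _ _ _ f hf
  letI instN : Module R N := Module.compHom N (opopRingHom R)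
  letI instN' : Module R N' := Module.compHom N' (opopRingHom R)
  have hcompN : ∀ (r : R) (n : N), r • n = op (op r) • n := fun r n => rfl
  have hcompN' : ∀ (r : R) (n : N'), r • n = op (op r) • n := fun r n => rfl
  set f' : N →ₗ[R] N' :=
    { toFun := f
      map_add' := f.map_add
      map_smul' := fun r n => by
        show f (op (op r) • n) = op (op r) • f n
        exact f.map_smul (op (op r)) n } with hf'def
  have hinj' : Function.Injective f' := hf
  have hcore : Function.Injective (NCmap R I f') := NCmap_injective_of_gflat h hI f' hinj'
  have key : ∀ t : NCTensor Rᵐᵒᵖ N I,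
      transferEquiv hcompN' (NCmapL Rᵐᵒᵖ I f t) = NCmap R I f' (transferEquiv hcompN t) := by
    intro t
    induction t using NCTensor.ind with
    | zero => simp
    | tmul n i =>
      rw [NCmapL_mk, transferEquiv_mk, transferEquiv_mk, NCmap_mk]
      rfl
    | add x y hx hy => rw [map_add, map_add, map_add, map_add, hx, hy]
  intro a b hab
  have h1 : NCmap R I f' (transferEquiv hcompN a) = NCmap R I f' (transferEquiv hcompN b) := by
    rw [← key, ← key, hab]
  exact (transferEquiv hcompN).injective (hcore h1)

end Core

/-- If every left `R`-module is Gorenstein flat (i.e. `l.wGgldim R = 0`), then every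
injective right `R`-module is flat and every injective left `R`-module is flat, i.e.
`R` is an IF ring. (Right `R`-modules are regarded as left `Rᵐᵒᵖ`-modules.) -/
theorem stmt0 (R : Type u) [Ring R]
    (h : ∀ M : ModuleCat.{u} R, IsGorensteinFlat R ↥M) :
    (∀ I : ModuleCat.{u} Rᵐᵒᵖ, Module.Injective Rᵐᵒᵖ ↥I → FlatModule Rᵐᵒᵖ ↥I) ∧
    (∀ I : ModuleCat.{u} R, Module.Injective R ↥I → FlatModule R ↥I) := by
  constructor
  · intro I hI
    exact flatModule_op_of_gflat h hI
  · intro I hI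
    exact flat_of_injective_of_gflat hI (h I)
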